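/- For the trapezium with ρ(x) = 1−ξx (ξ ∈ (0,1)), the Jacobi operator for multiplication by y is block-tridiagonal with tridiagonal blocks: the expansion of y H_{n,k}^{(a,b,c,d)} in the basis {H_{m,j}^{(a,b,c,d)}} has nonzero coefficients only for m ∈ {n-1, n, n+1} and j ∈ {k-1, k, k+1}. In particular ⟨y H_{n,k}^{(a,b,c,d)}, H_{m,j}^{(a,b,c,d)}⟩ = 0 whenever |m-n| > 1 or |j-k| > 1. -/

import Mathlib

open MeasureTheory Set

lemma stmt19_int_one {f : ℝ → ℝ} {s : Set ℝ} (h : ∫ x in s, f x = 1) :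
    IntegrableOn f s := by
  by_contra hc
  rw [MeasureTheory.integral_undef hc] at h
  exact one_ne_zero h.symm

lemma stmt19_cross (w : ℝ → ℝ) (hw : ∀ x ∈ Ioo (0:ℝ) 1, 0 ≤ w x)
    (hwm : AEStronglyMeasurable w (volume.restrict (Ioo (0:ℝ) 1)))
    (Q : ℕ → ℝ → ℝ)
    (horth : ∀ m n : ℕ, ∫ x in Ioo (0:ℝ) 1, Q m x * Q n x * w x = if m = n then 1 else 0)
    (hpoly : ∀ m, ∃ p : Polynomial ℝ, p.natDegree = m ∧ ∀ x, Q m x = p.eval x) :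
    ∀ i l : ℕ, IntegrableOn (fun x => Q i x * Q l x * w x) (Ioo (0:ℝ) 1) := by
  intro i l
  have hi : IntegrableOn (fun x => Q i x * Q i x * w x) (Ioo (0:ℝ) 1) :=
    stmt19_int_one (by simpa using horth i i)
  have hl : IntegrableOn (fun x => Q l x * Q l x * w x) (Ioo (0:ℝ) 1) :=
    stmt19_int_one (by simpa using horth l l)
  obtain ⟨pi, _, hpi⟩ := hpoly i
  obtain ⟨pl, _, hpl⟩ := hpoly l
  refine Integrable.mono'
    (g := fun x => (2:ℝ)⁻¹ * (Q i x * Q i x * w x) + (2:ℝ)⁻¹ * (Q l x * Q l x * w x))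
    ((hi.const_mul _).add (hl.const_mul _)) ?_ ?_
  · have hfe : (fun x => Q i x * Q l x * w x) = fun x => pi.eval x * pl.eval x * w x := by
      funext x; rw [hpi, hpl]
    rw [hfe]
    exact ((pi.continuous.mul pl.continuous).aestronglyMeasurable.mul hwm)
  · filter_upwards [ae_restrict_mem measurableSet_Ioo] with x hx
    have h1 : 0 ≤ w x := hw x hx
    have h2 : |Q i x * Q l x| ≤ 2⁻¹ * (Q i x * Q i x) + 2⁻¹ * (Q l x * Q l x) := by
      have := abs_mul_abs_self (Q i x)
      have := abs_mul_abs_self (Q l x)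
      have := sq_nonneg (|Q i x| - |Q l x|)
      rw [abs_mul]
      nlinarith [abs_nonneg (Q i x), abs_nonneg (Q l x)]
    calc ‖Q i x * Q l x * w x‖ = |Q i x * Q l x| * w x := by
          rw [Real.norm_eq_abs, abs_mul, abs_of_nonneg h1]
      _ ≤ (2⁻¹ * (Q i x * Q i x) + 2⁻¹ * (Q l x * Q l x)) * w x := by
          exact mul_le_mul_of_nonneg_right h2 h1
      _ = 2⁻¹ * (Q i x * Q i x * w x) + 2⁻¹ * (Q l x * Q l x * w x) := by ring

lemma stmt19_ortho (w : ℝ → ℝ) (hw : ∀ x ∈ Ioo (0:ℝ) 1, 0 ≤ w x)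
    (hwm : AEStronglyMeasurable w (volume.restrict (Ioo (0:ℝ) 1)))
    (Q : ℕ → ℝ → ℝ)
    (horth : ∀ m n : ℕ, ∫ x in Ioo (0:ℝ) 1, Q m x * Q n x * w x = if m = n then 1 else 0)
    (hpoly : ∀ m, ∃ p : Polynomial ℝ, p.natDegree = m ∧ ∀ x, Q m x = p.eval x)
    (nn : ℕ) :
    ∀ N : ℕ, ∀ q : Polynomial ℝ, q.natDegree ≤ N →
      IntegrableOn (fun x => Q nn x * q.eval x * w x) (Ioo (0:ℝ) 1) ∧
      (N < nn → ∫ x in Ioo (0:ℝ) 1, Q nn x * q.eval x * w x = 0) := by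
  have cross := stmt19_cross w hw hwm Q horth hpoly
  intro N
  induction N with
  | zero =>
    intro q hq
    obtain ⟨p0, hdeg0, hp0⟩ := hpoly 0
    obtain ⟨r, rfl⟩ := Polynomial.natDegree_eq_zero.mp hdeg0
    have hr : r ≠ 0 := by
      intro h
      have h0 := horth 0 0
      rw [if_pos rfl] at h0
      have : (fun x => Q 0 x * Q 0 x * w x) = fun _ => (0:ℝ) := by
        funext x; rw [hp0, Polynomial.eval_C, h]; ring
      rw [this] at h0
      simp at h0
    obtain ⟨s, rfl⟩ := Polynomial.natDegree_eq_zero.mp (Nat.le_zero.mp hq)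
    have hfe : (fun x => Q nn x * (Polynomial.C s).eval x * w x)
        = fun x => (s / r) * (Q nn x * Q 0 x * w x) := by
      funext x
      rw [hp0, Polynomial.eval_C, Polynomial.eval_C]
      field_simp
    constructor
    · rw [hfe]; exact (cross nn 0).const_mul _
    · intro hnn
      rw [hfe, integral_const_mul, horth nn 0, if_neg (by omega)]
      ring
  | succ N ih =>
    intro q hq
    obtain ⟨p, hdeg, hp⟩ := hpoly (N + 1)
    have hpne : p ≠ 0 := by
      intro h; rw [h] at hdeg; simp at hdeg
    have hlc : p.coeff (N + 1) ≠ 0 := by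
      have := Polynomial.leadingCoeff_ne_zero.mpr hpne
      rwa [Polynomial.leadingCoeff, hdeg] at this
    set cc := q.coeff (N + 1) / p.coeff (N + 1) with hcc
    set r := q - Polynomial.C cc * p with hrdef
    have hrdeg : r.natDegree ≤ N := by
      rw [Polynomial.natDegree_le_iff_coeff_eq_zero]
      intro M hM
      rw [hrdef]
      simp only [Polynomial.coeff_sub, Polynomial.coeff_C_mul]
      rcases eq_or_lt_of_le (Nat.succ_le_of_lt hM) with h | h
      · rw [← h, hcc]
        field_simp
        ring
      · rw [Polynomial.coeff_eq_zero_of_natDegree_lt (lt_of_le_of_lt hq h),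
          Polynomial.coeff_eq_zero_of_natDegree_lt (by omega : p.natDegree < M)]
        ring
    have hqe : ∀ x, q.eval x = r.eval x + cc * Q (N+1) x := by
      intro x; rw [hp, hrdef]
      simp only [Polynomial.eval_sub, Polynomial.eval_mul, Polynomial.eval_C]; ring
    have hfe : (fun x => Q nn x * q.eval x * w x)
        = fun x => (Q nn x * r.eval x * w x) + cc * (Q nn x * Q (N+1) x * w x) := by
      funext x; rw [hqe]; ring
    obtain ⟨ihint, ihval⟩ := ih r hrdeg
    constructor
    · rw [hfe]; exact ihint.add ((cross nn (N+1)).const_mul _)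
    · intro hnn
      rw [hfe, integral_add ihint ((cross nn (N+1)).const_mul _),
        ihval (by omega), integral_const_mul, horth nn (N+1), if_neg (by omega)]
      ring

lemma stmt19_inner (w : ℝ → ℝ) (hw : ∀ x ∈ Ioo (0:ℝ) 1, 0 ≤ w x)
    (hwm : AEStronglyMeasurable w (volume.restrict (Ioo (0:ℝ) 1)))
    (Q : ℕ → ℝ → ℝ)
    (horth : ∀ m n : ℕ, ∫ x in Ioo (0:ℝ) 1, Q m x * Q n x * w x = if m = n then 1 else 0)
    (hpoly : ∀ m, ∃ p : Polynomial ℝ, p.natDegree = m ∧ ∀ x, Q m x = p.eval x)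
    (δc γc : ℕ → ℝ)
    (hrec : ∀ k t, t * Q k t = δc k * Q (k + 1) t + γc k * Q k t +
      (if k = 0 then 0 else δc (k - 1) * Q (k - 1) t))
    (k j : ℕ) :
    IntegrableOn (fun u => u * Q k u * Q j u * w u) (Ioo (0:ℝ) 1) ∧
    ((k + 1 < j ∨ j + 1 < k) → ∫ u in Ioo (0:ℝ) 1, u * Q k u * Q j u * w u = 0) := by
  have cross := stmt19_cross w hw hwm Q horth hpoly
  constructor
  · refine Integrable.mono (cross k j) ?_ ?_
    · obtain ⟨pk, _, hpk⟩ := hpoly k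
      obtain ⟨pj, _, hpj⟩ := hpoly j
      have hfe : (fun u => u * Q k u * Q j u * w u)
          = fun u => u * pk.eval u * pj.eval u * w u := by
        funext u; rw [hpk, hpj]
      rw [hfe]
      exact ((continuous_id.mul pk.continuous).mul pj.continuous).aestronglyMeasurable.mul hwm
    · filter_upwards [ae_restrict_mem measurableSet_Ioo] with u hu
      obtain ⟨hu0, hu1⟩ := hu
      rw [Real.norm_eq_abs, Real.norm_eq_abs,
        show u * Q k u * Q j u * w u = u * (Q k u * Q j u * w u) by ring, abs_mul]
      have h1 : |u| ≤ 1 := by rw [abs_of_nonneg hu0.le]; exact hu1.le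
      exact mul_le_of_le_one_left (abs_nonneg _) h1
  · intro hjk
    set c3 : ℝ := if k = 0 then 0 else δc (k-1) with hc3
    have hfe : (fun u => u * Q k u * Q j u * w u)
        = fun u => δc k * (Q (k+1) u * Q j u * w u) + γc k * (Q k u * Q j u * w u)
          + c3 * (Q (k-1) u * Q j u * w u) := by
      funext u
      have h1 : u * Q k u * Q j u * w u = (u * Q k u) * (Q j u * w u) := by ring
      rw [h1, hrec k u, hc3]
      by_cases hk : k = 0
      · rw [if_pos hk, if_pos hk]; ring
      · rw [if_neg hk, if_neg hk]; ring
    have int1 := (cross (k+1) j).const_mul (δc k)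
    have int2 := (cross k j).const_mul (γc k)
    have int3 := (cross (k-1) j).const_mul c3
    have int12 : IntegrableOn (fun x => δc k * (Q (k+1) x * Q j x * w x)
        + γc k * (Q k x * Q j x * w x)) (Ioo (0:ℝ) 1) := int1.add int2
    rw [hfe, integral_add int12 int3, integral_add int1 int2,
      integral_const_mul, integral_const_mul, integral_const_mul,
      horth (k+1) j, horth k j, horth (k-1) j,
      if_neg (by omega), if_neg (by omega)]
    by_cases hk : k = 0
    · rw [if_neg (by omega)]; ring
    · rw [if_neg (by omega)]; ring

lemma stmt19_subst (g : ℝ → ℝ) {r : ℝ} (hr : 0 < r) :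
    ∫ y in Ioo (0:ℝ) r, g y = r * ∫ u in Ioo (0:ℝ) 1, g (r * u) := by
  rw [← integral_Ioc_eq_integral_Ioo, ← integral_Ioc_eq_integral_Ioo,
    ← intervalIntegral.integral_of_le hr.le, ← intervalIntegral.integral_of_le zero_le_one,
    intervalIntegral.integral_comp_mul_left g hr.ne']
  rw [mul_zero, mul_one, smul_eq_mul, ← mul_assoc, mul_inv_cancel₀ hr.ne', one_mul]

lemma stmt19_subst_int {g : ℝ → ℝ} {r : ℝ} (hr : 0 < r)
    (h : IntegrableOn (fun u => g (r * u)) (Ioo (0:ℝ) 1)) :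
    IntegrableOn g (Ioo (0:ℝ) r) := by
  have key : (fun u => (Ioo (0:ℝ) r).indicator g (r * u))
      = (Ioo (0:ℝ) 1).indicator (fun u => g (r * u)) := by
    funext u
    simp only [Set.indicator_apply, mem_Ioo]
    have h1 : (0 < r * u ∧ r * u < r) → (0 < u ∧ u < 1) := by
      rintro ⟨h1, h2⟩
      constructor
      · nlinarith
      · nlinarith
    have h2 : (0 < u ∧ u < 1) → (0 < r * u ∧ r * u < r) := by
      rintro ⟨h1, h2⟩
      exact ⟨mul_pos hr h1, by nlinarith⟩
    by_cases hc : 0 < r * u ∧ r * u < r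
    · rw [if_pos hc, if_pos (h1 hc)]
    · rw [if_neg hc, if_neg (fun hh => hc (h2 hh))]
  rw [← integrable_indicator_iff measurableSet_Ioo]
  refine (integrable_comp_mul_left_iff ((Ioo (0:ℝ) r).indicator g) hr.ne').mp ?_
  rw [key]
  exact (integrable_indicator_iff measurableSet_Ioo).mpr h

lemma stmt19_rpow_le {t lo : ℝ} (hlo : 0 < lo) (h1 : lo ≤ t) (h2 : t ≤ 1) (s e : ℝ) :
    t ^ s ≤ max 1 (lo ^ (s - e)) * t ^ e := by
  have ht : 0 < t := lt_of_lt_of_le hlo h1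
  have hts : t ^ s = t ^ (s - e) * t ^ e := by
    rw [← Real.rpow_add ht, sub_add_cancel]
  rw [hts]
  refine mul_le_mul_of_nonneg_right ?_ (Real.rpow_nonneg ht.le e)
  rcases le_or_gt 0 (s - e) with h | h
  · exact le_trans (Real.rpow_le_one ht.le h2 h) (le_max_left _ _)
  · exact le_trans (Real.rpow_le_rpow_of_nonpos hlo h1 h.le) (le_max_right _ _)

lemma stmt19_texp {t : ℝ} (ht : 0 < t) (kj : ℕ) (c d E : ℝ) (L : ℕ)
    (hE : ((kj:ℝ)) + c + d + 2 = E + L) :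
    t ^ (kj:ℕ) * (t ^ c * t ^ d) * t * t = t ^ E * t ^ (L:ℕ) := by
  have h1 : t ^ (kj:ℕ) * (t ^ c * t ^ d) * t * t = t ^ (((kj:ℝ)) + c + d + 2) := by
    rw [show ((kj:ℝ)) + c + d + 2 = ((kj:ℝ)) + c + d + 1 + 1 by ring,
      Real.rpow_add ht, Real.rpow_add ht, Real.rpow_add ht, Real.rpow_add ht,
      Real.rpow_one, Real.rpow_natCast]
    ring
  rw [h1, hE, Real.rpow_add ht, Real.rpow_natCast]


set_option maxHeartbeats 1600000 in
/-- on the trapezium, the Jacobi operator for multiplication by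
`y` is block-tridiagonal with tridiagonal blocks:
`⟨y H_{n,k}^{(a,b,c,d)}, H_{m,j}^{(a,b,c,d)}⟩ = 0` whenever `|m-n| > 1` or
`|j-k| > 1`. -/
theorem stmt19
    (ξ : ℝ) (hξ0 : 0 < ξ) (hξ1 : ξ < 1)
    (a b c d : ℝ)
    (ρ : ℝ → ℝ) (hρ : ∀ x, ρ x = 1 - ξ * x)
    (R : ℝ → ℕ → ℝ → ℝ) (P : ℕ → ℝ → ℝ)
    (hRorth : ∀ e : ℝ, ∀ m n : ℕ, ∫ x in Ioo (0 : ℝ) 1,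
        R e m x * R e n x * ((1 - x) ^ a * x ^ b * (1 - ξ * x) ^ e)
        = if m = n then 1 else 0)
    (hRpoly : ∀ e m, ∃ p : Polynomial ℝ, p.natDegree = m ∧ ∀ x, R e m x = p.eval x)
    (hPorth : ∀ k j : ℕ, ∫ y in Ioo (0 : ℝ) 1,
        P k y * P j y * ((1 - y) ^ d * y ^ c) = if k = j then 1 else 0)
    (hPpoly : ∀ k, ∃ p : Polynomial ℝ, p.natDegree = k ∧ ∀ y, P k y = p.eval y)
    -- three-term recurrence of the shifted Jacobi polynomials:
    -- t P̃_k = δ_k P̃_{k+1} + γ_k P̃_k + δ_{k-1} P̃_{k-1}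
    (δc γc : ℕ → ℝ)
    (hPrec : ∀ k t, t * P k t = δc k * P (k + 1) t + γc k * P k t +
      (if k = 0 then 0 else δc (k - 1) * P (k - 1) t))
    (Ω : Set (ℝ × ℝ))
    (hΩ : Ω = {z : ℝ × ℝ | 0 < z.1 ∧ z.1 < 1 ∧ 0 < z.2 ∧ z.2 < 1 - ξ * z.1})
    (H : ℕ → ℕ → ℝ × ℝ → ℝ)
    (hH : ∀ n k z, H n k z = R (c + d + 2 * (k : ℝ) + 1) (n - k) z.1 *
        ρ z.1 ^ (k : ℕ) * P k (z.2 / ρ z.1))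
    (W : ℝ × ℝ → ℝ)
    (hW : ∀ z : ℝ × ℝ,
      W z = (1 - z.1) ^ a * z.1 ^ b * z.2 ^ c * (1 - ξ * z.1 - z.2) ^ d) :
    ∀ n k m j : ℕ, k ≤ n → j ≤ m →
      (1 < |(m : ℤ) - (n : ℤ)| ∨ 1 < |(j : ℤ) - (k : ℤ)|) →
      ∫ z in Ω, z.2 * H n k z * H m j z * W z = 0 := by
  intro n k m j hkn hjm hcase
  -- basic positivity facts
  have ht_pos : ∀ x ∈ Ioo (0:ℝ) 1, 0 < 1 - ξ * x := by
    intro x hx; obtain ⟨hx0, hx1⟩ := hx; nlinarith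
  have ht_lo : ∀ x ∈ Ioo (0:ℝ) 1, 1 - ξ ≤ 1 - ξ * x := by
    intro x hx; obtain ⟨hx0, hx1⟩ := hx; nlinarith
  have ht_hi : ∀ x ∈ Ioo (0:ℝ) 1, 1 - ξ * x ≤ 1 := by
    intro x hx; obtain ⟨hx0, hx1⟩ := hx; nlinarith
  have hξpos : (0:ℝ) < 1 - ξ := by linarith
  -- abbreviations
  set e1 : ℝ := c + d + 2 * (k : ℝ) + 1 with he1
  set e2 : ℝ := c + d + 2 * (j : ℝ) + 1 with he2
  set wP : ℝ → ℝ := fun u => (1 - u) ^ d * u ^ c with hwP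
  set G : ℝ → ℝ := fun u => u * P k u * P j u * wP u with hG
  set wR : ℝ → ℝ → ℝ := fun e x => (1 - x) ^ a * x ^ b * (1 - ξ * x) ^ e with hwR
  set A' : ℝ → ℝ := fun x => R e1 (n-k) x * R e2 (m-j) x * ((1 - x) ^ a * x ^ b) *
      ((1 - ξ * x) ^ (k + j : ℕ) * ((1 - ξ * x) ^ c * (1 - ξ * x) ^ d) * (1 - ξ * x)) with hA'
  set A : ℝ → ℝ := fun x => (1 - ξ * x) * A' x with hA
  set F : ℝ × ℝ → ℝ := fun z => z.2 *
      (R e1 (n-k) z.1 * (1 - ξ * z.1) ^ (k : ℕ) * P k (z.2 / (1 - ξ * z.1))) *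
      (R e2 (m-j) z.1 * (1 - ξ * z.1) ^ (j : ℕ) * P j (z.2 / (1 - ξ * z.1))) *
      ((1 - z.1) ^ a * z.1 ^ b * z.2 ^ c * (1 - ξ * z.1 - z.2) ^ d) with hF
  -- goal reduction to F
  have hFgoal : ∀ z : ℝ × ℝ, z.2 * H n k z * H m j z * W z = F z := by
    intro z
    rw [hH, hH, hW, hρ, hF, he1, he2]
  rw [show (∫ z in Ω, z.2 * H n k z * H m j z * W z)
      = ∫ z in Ω, F z from integral_congr_ae (Filter.Eventually.of_forall fun z => hFgoal z)]
  -- measurability of weights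
  have hwPm : AEStronglyMeasurable wP (volume.restrict (Ioo (0:ℝ) 1)) := by
    rw [hwP]
    exact (((measurable_const.sub measurable_id).pow measurable_const).mul
      (measurable_id.pow measurable_const)).aestronglyMeasurable
  have hwP0 : ∀ u ∈ Ioo (0:ℝ) 1, 0 ≤ wP u := by
    intro u hu
    exact mul_nonneg (Real.rpow_nonneg (by linarith [hu.2]) d) (Real.rpow_nonneg hu.1.le c)
  have hwRm : ∀ e : ℝ, AEStronglyMeasurable (wR e) (volume.restrict (Ioo (0:ℝ) 1)) := by
    intro e
    rw [hwR]
    exact ((((measurable_const.sub measurable_id).pow measurable_const).mul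
      (measurable_id.pow measurable_const)).mul
      ((measurable_const.sub (measurable_id.const_mul ξ)).pow measurable_const)).aestronglyMeasurable
  have hwR0 : ∀ e : ℝ, ∀ x ∈ Ioo (0:ℝ) 1, 0 ≤ wR e x := by
    intro e x hx
    exact mul_nonneg (mul_nonneg (Real.rpow_nonneg (by linarith [hx.2]) a)
      (Real.rpow_nonneg hx.1.le b)) (Real.rpow_nonneg (ht_pos x hx).le e)
  have hRorth' : ∀ e : ℝ, ∀ m' n' : ℕ,
      ∫ x in Ioo (0:ℝ) 1, R e m' x * R e n' x * wR e x = if m' = n' then 1 else 0 := by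
    intro e m' n'; rw [hwR]; exact hRorth e m' n'
  have hPorth' : ∀ k' j' : ℕ,
      ∫ u in Ioo (0:ℝ) 1, P k' u * P j' u * wP u = if k' = j' then 1 else 0 := by
    intro k' j'; rw [hwP]; exact hPorth k' j'
  -- inner integral facts
  obtain ⟨Gint, Gzero⟩ := stmt19_inner wP hwP0 hwPm P hPorth' hPpoly δc γc hPrec k j
  -- pointwise substitution identity
  have hFsub : ∀ x ∈ Ioo (0:ℝ) 1, ∀ u ∈ Ioo (0:ℝ) 1,
      F (x, (1 - ξ * x) * u) = A' x * G u := by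
    intro x hx u hu
    have ht := ht_pos x hx
    simp only [hF, hA', hG, hwP]
    rw [mul_div_cancel_left₀ u ht.ne']
    rw [Real.mul_rpow ht.le hu.1.le]
    rw [show 1 - ξ * x - (1 - ξ * x) * u = (1 - ξ * x) * (1 - u) by ring,
      Real.mul_rpow ht.le (by linarith [hu.2] : (0:ℝ) ≤ 1 - u)]
    rw [pow_add]
    ring
  -- polynomials for the R factors
  obtain ⟨p1, hp1deg, hp1⟩ := hRpoly e1 (n-k)
  obtain ⟨p2, hp2deg, hp2⟩ := hRpoly e2 (m-j)
  obtain ⟨pk, hpkdeg, hpk⟩ := hPpoly k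
  obtain ⟨pj, hpjdeg, hpj⟩ := hPpoly j
  -- measurability of F
  have hmt : Measurable (fun z : ℝ × ℝ => 1 - ξ * z.1) :=
    measurable_const.sub (measurable_fst.const_mul ξ)
  have hFmeas : Measurable F := by
    have hFeq : F = fun z : ℝ × ℝ => z.2 *
        (p1.eval z.1 * (1 - ξ * z.1) ^ (k : ℕ) * pk.eval (z.2 / (1 - ξ * z.1))) *
        (p2.eval z.1 * (1 - ξ * z.1) ^ (j : ℕ) * pj.eval (z.2 / (1 - ξ * z.1))) *
        ((1 - z.1) ^ a * z.1 ^ b * z.2 ^ c * (1 - ξ * z.1 - z.2) ^ d) := by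
      funext z; simp only [hF, hp1, hp2, hpk, hpj]
    rw [hFeq]
    refine ((measurable_snd.mul ?_).mul ?_).mul ?_
    · exact ((p1.continuous.measurable.comp measurable_fst).mul (hmt.pow_const k)).mul
        (pk.continuous.measurable.comp (measurable_snd.div hmt))
    · exact ((p2.continuous.measurable.comp measurable_fst).mul (hmt.pow_const j)).mul
        (pj.continuous.measurable.comp (measurable_snd.div hmt))
    · exact ((((measurable_const.sub measurable_fst).pow measurable_const).mul
        (measurable_fst.pow measurable_const)).mul (measurable_snd.pow measurable_const)).mul
        ((hmt.sub measurable_snd).pow measurable_const)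
  -- measurability of Omega
  have hΩmeas : MeasurableSet Ω := by
    rw [hΩ]
    have h1 : MeasurableSet {z : ℝ × ℝ | 0 < z.1} :=
      measurableSet_lt measurable_const measurable_fst
    have h2 : MeasurableSet {z : ℝ × ℝ | z.1 < 1} :=
      measurableSet_lt measurable_fst measurable_const
    have h3 : MeasurableSet {z : ℝ × ℝ | 0 < z.2} :=
      measurableSet_lt measurable_const measurable_snd
    have h4 : MeasurableSet {z : ℝ × ℝ | z.2 < 1 - ξ * z.1} :=
      measurableSet_lt measurable_snd hmt
    simp only [setOf_and]
    exact h1.inter (h2.inter (h3.inter h4))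
  -- sections of the indicator
  have hsect : ∀ (x y : ℝ), Ω.indicator F (x, y) =
      if x ∈ Ioo (0:ℝ) 1 then (Ioo (0:ℝ) (1 - ξ * x)).indicator (fun y => F (x, y)) y
      else 0 := by
    intro x y
    by_cases hx : x ∈ Ioo (0:ℝ) 1
    · rw [if_pos hx]
      by_cases hy : y ∈ Ioo (0:ℝ) (1 - ξ * x)
      · rw [indicator_of_mem hy, indicator_of_mem]
        rw [hΩ]; exact ⟨hx.1, hx.2, hy.1, hy.2⟩
      · rw [indicator_of_notMem hy, indicator_of_notMem]
        rw [hΩ]; intro hmem; exact hy ⟨hmem.2.2.1, hmem.2.2.2⟩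
    · rw [if_neg hx]
      apply indicator_of_notMem
      rw [hΩ]; intro hmem; exact hx ⟨hmem.1, hmem.2.1⟩
  -- integrability of sections
  have hIOn : ∀ x ∈ Ioo (0:ℝ) 1, IntegrableOn (fun y => F (x, y)) (Ioo (0:ℝ) (1 - ξ * x)) := by
    intro x hx
    refine stmt19_subst_int (ht_pos x hx) ?_
    exact IntegrableOn.congr_fun (Gint.const_mul (A' x))
      (fun u hu => (hFsub x hx u hu).symm) measurableSet_Ioo
  -- value of sections
  have hIval : ∀ x ∈ Ioo (0:ℝ) 1,
      (∫ y in Ioo (0:ℝ) (1 - ξ * x), F (x, y)) = A x * ∫ u in Ioo (0:ℝ) 1, G u := by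
    intro x hx
    rw [stmt19_subst (fun y => F (x, y)) (ht_pos x hx)]
    rw [setIntegral_congr_fun measurableSet_Ioo (fun u hu => hFsub x hx u hu)]
    rw [integral_const_mul]
    simp only [hA]; ring
  -- norm of sections
  set CG : ℝ := ∫ u in Ioo (0:ℝ) 1, ‖G u‖ with hCG
  have hnormval : ∀ x : ℝ, (∫ y, ‖Ω.indicator F (x, y)‖) =
      (Ioo (0:ℝ) 1).indicator (fun x => |A x| * CG) x := by
    intro x
    by_cases hx : x ∈ Ioo (0:ℝ) 1
    · have ht := ht_pos x hx
      simp only [hsect, if_pos hx]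
      rw [show (fun y => ‖(Ioo (0:ℝ) (1 - ξ * x)).indicator (fun y => F (x, y)) y‖)
          = fun y => (Ioo (0:ℝ) (1 - ξ * x)).indicator (fun y => ‖F (x, y)‖) y from
          funext fun y => norm_indicator_eq_indicator_norm _ _]
      rw [integral_indicator measurableSet_Ioo]
      rw [stmt19_subst (fun y => ‖F (x, y)‖) ht]
      rw [setIntegral_congr_fun measurableSet_Ioo
        (fun u hu => by
          show ‖F (x, (1 - ξ * x) * u)‖ = ‖A' x‖ * ‖G u‖
          rw [hFsub x hx u hu, norm_mul] :
          EqOn (fun u => ‖F (x, (1 - ξ * x) * u)‖) (fun u => ‖A' x‖ * ‖G u‖) (Ioo (0:ℝ) 1))]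
      rw [integral_const_mul, ← hCG, indicator_of_mem hx]
      simp only [hA]
      rw [show |(1 - ξ * x) * A' x| = (1 - ξ * x) * |A' x| from by
        rw [abs_mul, abs_of_nonneg ht.le], Real.norm_eq_abs]
      ring
    · simp only [hsect, if_neg hx, norm_zero, integral_zero, indicator_of_notMem hx]
  -- integrability of A
  have hAint : IntegrableOn A (Ioo (0:ℝ) 1) := by
    set s : ℝ := ((k + j : ℕ) : ℝ) + c + d + 2 with hs
    set M1 : ℝ := max 1 ((1 - ξ) ^ (s - e1)) with hM1
    set M2 : ℝ := max 1 ((1 - ξ) ^ (e1 - e2)) with hM2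
    have hM1' : (0:ℝ) ≤ M1 := le_trans zero_le_one (le_max_left _ _)
    have hM2' : (0:ℝ) ≤ M2 := le_trans zero_le_one (le_max_left _ _)
    have d1 : IntegrableOn (fun x => R e1 (n-k) x * R e1 (n-k) x * wR e1 x) (Ioo (0:ℝ) 1) :=
      stmt19_int_one (by simpa using hRorth' e1 (n-k) (n-k))
    have d2 : IntegrableOn (fun x => R e2 (m-j) x * R e2 (m-j) x * wR e2 x) (Ioo (0:ℝ) 1) :=
      stmt19_int_one (by simpa using hRorth' e2 (m-j) (m-j))
    refine Integrable.mono'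
      (g := fun x => M1 * (R e1 (n-k) x * R e1 (n-k) x * wR e1 x)
        + (M1 * M2) * (R e2 (m-j) x * R e2 (m-j) x * wR e2 x))
      ((d1.const_mul _).add (d2.const_mul _)) ?_ ?_
    · have hAeq : A = fun x => (1 - ξ * x) * (p1.eval x * p2.eval x * ((1 - x) ^ a * x ^ b) *
          ((1 - ξ * x) ^ (k + j : ℕ) * ((1 - ξ * x) ^ c * (1 - ξ * x) ^ d) * (1 - ξ * x))) := by
        funext x; simp only [hA, hA', hp1, hp2]
      rw [hAeq]
      refine ((measurable_const.sub (measurable_id.const_mul ξ)).mul ?_).aestronglyMeasurable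
      refine ((p1.continuous.measurable.mul p2.continuous.measurable).mul
        (((measurable_const.sub measurable_id).pow measurable_const).mul
          (measurable_id.pow measurable_const))).mul ?_
      exact (((measurable_const.sub (measurable_id.const_mul ξ)).pow_const _).mul
        (((measurable_const.sub (measurable_id.const_mul ξ)).pow measurable_const).mul
          ((measurable_const.sub (measurable_id.const_mul ξ)).pow measurable_const))).mul
        (measurable_const.sub (measurable_id.const_mul ξ))
    · filter_upwards [ae_restrict_mem measurableSet_Ioo] with x hx
      have ht := ht_pos x hx
      have hT := stmt19_texp ht (k + j) c d s 0 (by rw [hs]; push_cast; ring)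
      rw [pow_zero, mul_one] at hT
      set r1 := R e1 (n-k) x
      set r2 := R e2 (m-j) x
      set t := 1 - ξ * x
      set w0 : ℝ := (1 - x) ^ a * x ^ b with hw0def
      have hw0 : 0 ≤ w0 := mul_nonneg (Real.rpow_nonneg (by linarith [hx.2]) a)
        (Real.rpow_nonneg hx.1.le b)
      have hAx : A x = r1 * r2 * w0 * (t ^ (k + j : ℕ) * (t ^ c * t ^ d) * t * t) := by
        simp only [hA, hA']; ring
      have habs : |r1 * r2| ≤ r1 * r1 + r2 * r2 := by
        rw [abs_mul]
        nlinarith [sq_nonneg (|r1| - |r2|), abs_mul_abs_self r1, abs_mul_abs_self r2,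
          abs_nonneg r1, abs_nonneg r2]
      have hse1 : t ^ s ≤ M1 * t ^ e1 :=
        stmt19_rpow_le hξpos (ht_lo x hx) (ht_hi x hx) s e1
      have he12 : t ^ e1 ≤ M2 * t ^ e2 :=
        stmt19_rpow_le hξpos (ht_lo x hx) (ht_hi x hx) e1 e2
      have hte1 : (0:ℝ) ≤ t ^ e1 := Real.rpow_nonneg ht.le e1
      have hte2 : (0:ℝ) ≤ t ^ e2 := Real.rpow_nonneg ht.le e2
      have hts : (0:ℝ) ≤ t ^ s := Real.rpow_nonneg ht.le s
      calc ‖A x‖ = |r1 * r2| * (w0 * t ^ s) := by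
            rw [hAx, hT, Real.norm_eq_abs,
              show r1 * r2 * w0 * t ^ s = (r1 * r2) * (w0 * t ^ s) by ring, abs_mul,
              abs_of_nonneg (mul_nonneg hw0 hts)]
        _ ≤ (r1 * r1 + r2 * r2) * (w0 * t ^ s) :=
            mul_le_mul_of_nonneg_right habs (mul_nonneg hw0 hts)
        _ ≤ (r1 * r1 + r2 * r2) * (w0 * (M1 * t ^ e1)) := by
            refine mul_le_mul_of_nonneg_left (mul_le_mul_of_nonneg_left hse1 hw0) ?_
            nlinarith [sq_nonneg r1, sq_nonneg r2]
        _ = M1 * (r1 * r1 * (w0 * t ^ e1)) + M1 * (r2 * r2 * (w0 * t ^ e1)) := by ring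
        _ ≤ M1 * (r1 * r1 * (w0 * t ^ e1)) + M1 * (r2 * r2 * (M2 * (w0 * t ^ e2))) := by
            refine add_le_add_right (mul_le_mul_of_nonneg_left
              (mul_le_mul_of_nonneg_left ?_ (by nlinarith [sq_nonneg r2])) hM1') _
            calc w0 * t ^ e1 ≤ w0 * (M2 * t ^ e2) := mul_le_mul_of_nonneg_left he12 hw0
              _ = M2 * (w0 * t ^ e2) := by ring
        _ = M1 * (r1 * r1 * wR e1 x) + (M1 * M2) * (r2 * r2 * wR e2 x) := by
            simp only [hwR, hw0def]; ring
  -- integrability over the product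
  have hInt : Integrable (Ω.indicator F) (volume.prod volume) := by
    refine (integrable_prod_iff (hFmeas.indicator hΩmeas).aestronglyMeasurable).mpr ⟨?_, ?_⟩
    · refine Filter.Eventually.of_forall fun x => ?_
      simp only [hsect]
      by_cases hx : x ∈ Ioo (0:ℝ) 1
      · simp only [if_pos hx]
        exact (integrable_indicator_iff measurableSet_Ioo).mpr (hIOn x hx)
      · simp only [if_neg hx]
        exact integrable_zero _ _ _
    · rw [show (fun x => ∫ y, ‖Ω.indicator F (x, y)‖)
          = (Ioo (0:ℝ) 1).indicator (fun x => |A x| * CG) from funext hnormval]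
      rw [integrable_indicator_iff measurableSet_Ioo]
      exact hAint.abs.mul_const CG
  -- the key factorization
  have key : (∫ z in Ω, F z) = (∫ x in Ioo (0:ℝ) 1, A x) * ∫ u in Ioo (0:ℝ) 1, G u := by
    rw [← integral_indicator hΩmeas]
    rw [Measure.volume_eq_prod, integral_prod _ hInt]
    have hx_eq : ∀ x : ℝ, (∫ y, Ω.indicator F (x, y)) =
        (Ioo (0:ℝ) 1).indicator (fun x => A x * ∫ u in Ioo (0:ℝ) 1, G u) x := by
      intro x
      by_cases hx : x ∈ Ioo (0:ℝ) 1
      · simp only [hsect, if_pos hx]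
        rw [integral_indicator measurableSet_Ioo, hIval x hx, indicator_of_mem hx]
      · simp only [hsect, if_neg hx, integral_zero, indicator_of_notMem hx]
    rw [show (fun x => ∫ y, Ω.indicator F (x, y))
        = (Ioo (0:ℝ) 1).indicator (fun x => A x * ∫ u in Ioo (0:ℝ) 1, G u) from funext hx_eq]
    rw [integral_indicator measurableSet_Ioo, integral_mul_const]
  rw [key]
  by_cases hjk : k + 1 < j ∨ j + 1 < k
  · have hJG : (∫ u in Ioo (0:ℝ) 1, G u) = 0 := Gzero hjk
    rw [hJG, mul_zero]
  · have hmn : m + 1 < n ∨ n + 1 < m := by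
      rcases hcase with h | h
      · rcases abs_cases ((m:ℤ) - (n:ℤ)) with ⟨h1, h2⟩ | ⟨h1, h2⟩ <;> rw [h1] at h <;> omega
      · exfalso
        rcases abs_cases ((j:ℤ) - (k:ℤ)) with ⟨h1, h2⟩ | ⟨h1, h2⟩ <;> rw [h1] at h <;> omega
    have hA0 : (∫ x in Ioo (0:ℝ) 1, A x) = 0 := by
      set lin : Polynomial ℝ := 1 - Polynomial.C ξ * Polynomial.X with hlin
      have hlin_deg : lin.natDegree ≤ 1 := by
        rw [hlin]
        refine le_trans (Polynomial.natDegree_sub_le _ _) ?_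
        rw [Polynomial.natDegree_one]
        simp only [max_le_iff]
        refine ⟨Nat.zero_le 1, le_trans Polynomial.natDegree_mul_le ?_⟩
        simp [Polynomial.natDegree_C, Polynomial.natDegree_X]
      have hlin_eval : ∀ x : ℝ, lin.eval x = 1 - ξ * x := by
        intro x; rw [hlin]; simp
      have hlin2_deg : (lin ^ 2).natDegree ≤ 2 := by
        refine le_trans Polynomial.natDegree_pow_le ?_
        omega
      have ortho := fun (E : ℝ) (nn : ℕ) =>
        stmt19_ortho (wR E) (hwR0 E) (hwRm E) (R E) (hRorth' E) (hRpoly E) nn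
      have hj3 : j = k + 1 ∨ j = k ∨ k = j + 1 := by omega
      rcases hj3 with hj | hj | hj
      · rcases hmn with hmn | hmn
        · -- j = k+1, m+1 < n
          have hE : ((k + j : ℕ) : ℝ) + c + d + 2 = e1 + ((2 : ℕ) : ℝ) := by
            rw [he1, hj]; push_cast; ring
          have hq : (p2 * lin ^ 2).natDegree ≤ (m-j) + 2 := le_trans Polynomial.natDegree_mul_le (add_le_add (le_of_eq hp2deg) hlin2_deg)
          have hpt : EqOn A (fun x => R e1 (n-k) x * (p2 * lin ^ 2).eval x * wR e1 x)
              (Ioo (0:ℝ) 1) := by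
            intro x hx
            have ht := ht_pos x hx
            have hT := stmt19_texp ht (k + j) c d e1 2 hE
            simp only [hA, hA', hwR, Polynomial.eval_mul, Polynomial.eval_pow,
              Polynomial.eval_one, hlin_eval, ← hp1, ← hp2]
            linear_combination (R e1 (n-k) x * R e2 (m-j) x * ((1 - x) ^ a * x ^ b)) * hT
          rw [setIntegral_congr_fun measurableSet_Ioo hpt]
          exact (ortho e1 (n-k) ((m-j) + 2) (p2 * lin ^ 2) hq).2 (by omega)
        · -- j = k+1, n+1 < m
          have hE : ((k + j : ℕ) : ℝ) + c + d + 2 = e2 + ((0 : ℕ) : ℝ) := by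
            rw [he2, hj]; push_cast; ring
          have hq : (p1).natDegree ≤ n-k := le_of_eq hp1deg
          have hpt : EqOn A (fun x => R e2 (m-j) x * (p1).eval x * wR e2 x)
              (Ioo (0:ℝ) 1) := by
            intro x hx
            have ht := ht_pos x hx
            have hT := stmt19_texp ht (k + j) c d e2 0 hE
            simp only [hA, hA', hwR, Polynomial.eval_mul, Polynomial.eval_pow,
              Polynomial.eval_one, hlin_eval, ← hp1, ← hp2]
            linear_combination (R e1 (n-k) x * R e2 (m-j) x * ((1 - x) ^ a * x ^ b)) * hT
          rw [setIntegral_congr_fun measurableSet_Ioo hpt]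
          exact (ortho e2 (m-j) (n-k) (p1) hq).2 (by omega)
      · rcases hmn with hmn | hmn
        · -- j = k, m+1 < n
          have hE : ((k + j : ℕ) : ℝ) + c + d + 2 = e1 + ((1 : ℕ) : ℝ) := by
            rw [he1, hj]; push_cast; ring
          have hq : (p2 * lin).natDegree ≤ (m-j) + 1 := le_trans Polynomial.natDegree_mul_le (add_le_add (le_of_eq hp2deg) hlin_deg)
          have hpt : EqOn A (fun x => R e1 (n-k) x * (p2 * lin).eval x * wR e1 x)
              (Ioo (0:ℝ) 1) := by
            intro x hx
            have ht := ht_pos x hx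
            have hT := stmt19_texp ht (k + j) c d e1 1 hE
            simp only [hA, hA', hwR, Polynomial.eval_mul, Polynomial.eval_pow,
              Polynomial.eval_one, hlin_eval, ← hp1, ← hp2]
            linear_combination (R e1 (n-k) x * R e2 (m-j) x * ((1 - x) ^ a * x ^ b)) * hT
          rw [setIntegral_congr_fun measurableSet_Ioo hpt]
          exact (ortho e1 (n-k) ((m-j) + 1) (p2 * lin) hq).2 (by omega)
        · -- j = k, n+1 < m
          have hE : ((k + j : ℕ) : ℝ) + c + d + 2 = e2 + ((1 : ℕ) : ℝ) := by
            rw [he2, hj]; push_cast; ring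
          have hq : (p1 * lin).natDegree ≤ (n-k) + 1 := le_trans Polynomial.natDegree_mul_le (add_le_add (le_of_eq hp1deg) hlin_deg)
          have hpt : EqOn A (fun x => R e2 (m-j) x * (p1 * lin).eval x * wR e2 x)
              (Ioo (0:ℝ) 1) := by
            intro x hx
            have ht := ht_pos x hx
            have hT := stmt19_texp ht (k + j) c d e2 1 hE
            simp only [hA, hA', hwR, Polynomial.eval_mul, Polynomial.eval_pow,
              Polynomial.eval_one, hlin_eval, ← hp1, ← hp2]
            linear_combination (R e1 (n-k) x * R e2 (m-j) x * ((1 - x) ^ a * x ^ b)) * hT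
          rw [setIntegral_congr_fun measurableSet_Ioo hpt]
          exact (ortho e2 (m-j) ((n-k) + 1) (p1 * lin) hq).2 (by omega)
      · rcases hmn with hmn | hmn
        · -- k = j+1, m+1 < n
          have hE : ((k + j : ℕ) : ℝ) + c + d + 2 = e1 + ((0 : ℕ) : ℝ) := by
            rw [he1, hj]; push_cast; ring
          have hq : (p2).natDegree ≤ m-j := le_of_eq hp2deg
          have hpt : EqOn A (fun x => R e1 (n-k) x * (p2).eval x * wR e1 x)
              (Ioo (0:ℝ) 1) := by
            intro x hx
            have ht := ht_pos x hx
            have hT := stmt19_texp ht (k + j) c d e1 0 hE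
            simp only [hA, hA', hwR, Polynomial.eval_mul, Polynomial.eval_pow,
              Polynomial.eval_one, hlin_eval, ← hp1, ← hp2]
            linear_combination (R e1 (n-k) x * R e2 (m-j) x * ((1 - x) ^ a * x ^ b)) * hT
          rw [setIntegral_congr_fun measurableSet_Ioo hpt]
          exact (ortho e1 (n-k) (m-j) (p2) hq).2 (by omega)
        · -- k = j+1, n+1 < m
          have hE : ((k + j : ℕ) : ℝ) + c + d + 2 = e2 + ((2 : ℕ) : ℝ) := by
            rw [he2, hj]; push_cast; ring
          have hq : (p1 * lin ^ 2).natDegree ≤ (n-k) + 2 := le_trans Polynomial.natDegree_mul_le (add_le_add (le_of_eq hp1deg) hlin2_deg)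
          have hpt : EqOn A (fun x => R e2 (m-j) x * (p1 * lin ^ 2).eval x * wR e2 x)
              (Ioo (0:ℝ) 1) := by
            intro x hx
            have ht := ht_pos x hx
            have hT := stmt19_texp ht (k + j) c d e2 2 hE
            simp only [hA, hA', hwR, Polynomial.eval_mul, Polynomial.eval_pow,
              Polynomial.eval_one, hlin_eval, ← hp1, ← hp2]
            linear_combination (R e1 (n-k) x * R e2 (m-j) x * ((1 - x) ^ a * x ^ b)) * hT
          rw [setIntegral_congr_fun measurableSet_Ioo hpt]
          exact (ortho e2 (m-j) ((n-k) + 2) (p1 * lin ^ 2) hq).2 (by omega)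
    rw [hA0, zero_mul]
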